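/- arXiv:2201.04379 — 7 statements merged into one kernel-verified Lean document; each statement's English description precedes it below -/
import Mathlib

section
/- For any a > 0 and any real q with 1 < q < 1 + (e^{4a} + 4a - e^{2a}√(e^{4a} + 8a))/(8a²), we have q / tanh(a q) > 1 + √(q² - 1). -/
private lemma aux_mE (a E m : ℝ) (ha : 0 < a) (hE : 0 < E) (hm0 : 0 ≤ m)
    (hm2 : m ^ 2 = E ^ 2 + 8 * a * E) : E < m := by
  nlinarith [mul_pos ha hE]

private lemma aux_2ae (a ε E m : ℝ) (ha : 0 < a) (hε : 0 < ε) (hmE : E < m)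
    (hm8 : 8 * a ^ 2 * ε + m < E + 4 * a) : 2 * a * ε < 1 := by
  nlinarith [mul_pos ha hε]

private lemma aux_P (a ε E m : ℝ) (ha : 0 < a) (hε : 0 < ε) (hm0 : 0 ≤ m)
    (hm2 : m ^ 2 = E ^ 2 + 8 * a * E)
    (hm8 : 8 * a ^ 2 * ε + m < E + 4 * a) :
    E * ε < (1 - 2 * a * ε) ^ 2 := by
  have h1 : 0 < E + 4 * a - 8 * a ^ 2 * ε - m := by linarith
  have h2 : 0 < E + 4 * a - 8 * a ^ 2 * ε + m := by nlinarith
  nlinarith [mul_pos h1 h2, mul_pos ha ha]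

private lemma aux_w (ε w : ℝ) (hε : 0 < ε) (hw0 : 0 ≤ w) (hw2 : w ^ 2 = ε + 2) :
    2 * w ≤ (2 + ε) ^ 2 := by
  have hw1 : 1 ≤ w := by nlinarith
  nlinarith [mul_le_mul_of_nonneg_left hw1 hw0, sq_nonneg w]

private lemma aux_final (u s q : ℝ) (hq1 : 1 < q) (hs0 : 0 ≤ s)
    (hs2 : s ^ 2 = q ^ 2 - 1) (hu1 : 1 < u)
    (hmain : 2 * s * u < (q + 1 + s) ^ 2) :
    (1 + s) * (u - 1) < q * (u + 1) := by
  have hden : (0:ℝ) < 1 + s + q := by linarith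
  have hkey : u * (1 + s - q) < q + 1 + s := by
    have h5 : u * (1 + s - q) * (1 + s + q) < (q + 1 + s) * (1 + s + q) := by
      have heq : u * (1 + s - q) * (1 + s + q) = 2 * s * u := by
        linear_combination u * hs2
      have hr : (q + 1 + s) * (1 + s + q) = (q + 1 + s) ^ 2 := by ring
      rw [heq, hr]; exact hmain
    exact lt_of_mul_lt_mul_right (by linarith) hden.le
  nlinarith [hkey]

theorem q_div_tanh_gt (a q : ℝ) (ha : 0 < a) (hq1 : 1 < q)
    (hq2 : q < 1 + (Real.exp (4 * a) + 4 * a -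
      Real.exp (2 * a) * Real.sqrt (Real.exp (4 * a) + 8 * a)) / (8 * a ^ 2)) :
    q / Real.tanh (a * q) > 1 + Real.sqrt (q ^ 2 - 1) := by
  set E := Real.exp (4 * a) with hE
  set e2 := Real.exp (2 * a) with he2
  have hEpos : 0 < E := Real.exp_pos _
  have he2pos : 0 < e2 := Real.exp_pos _
  have hE2 : e2 ^ 2 = E := by
    rw [he2, hE, sq, ← Real.exp_add]; ring_nf
  set d := Real.sqrt (E + 8 * a) with hd
  have hd0 : 0 ≤ d := Real.sqrt_nonneg _
  have hd2 : d ^ 2 = E + 8 * a := Real.sq_sqrt (by positivity)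
  set m := e2 * d with hm
  have hm0 : 0 ≤ m := by positivity
  have hm2 : m ^ 2 = E ^ 2 + 8 * a * E := by
    rw [hm, mul_pow, hE2, hd2]; ring
  set ε := q - 1 with hεdef
  have hε : 0 < ε := by rw [hεdef]; linarith
  have hm8 : 8 * a ^ 2 * ε + m < E + 4 * a := by
    have h1 : ε < (E + 4 * a - m) / (8 * a ^ 2) := by
      rw [hεdef]; linarith
    have := (lt_div_iff₀ (by positivity : (0:ℝ) < 8 * a ^ 2)).mp h1
    linarith
  have hmE : E < m := aux_mE a E m ha hEpos hm0 hm2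
  have h2aε : 2 * a * ε < 1 := aux_2ae a ε E m ha hε hmE hm8
  have hP : E * ε < (1 - 2 * a * ε) ^ 2 := aux_P a ε E m ha hε hm0 hm2 hm8
  set sε := Real.sqrt ε with hsε
  have hsε0 : 0 ≤ sε := Real.sqrt_nonneg _
  have hsε2 : sε ^ 2 = ε := Real.sq_sqrt hε.le
  have key1 : e2 * sε < 1 - 2 * a * ε := by
    have hsq : (e2 * sε) ^ 2 < (1 - 2 * a * ε) ^ 2 := by
      rw [mul_pow, hE2, hsε2]; exact hP
    exact lt_of_pow_lt_pow_left₀ 2 (by linarith) hsq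
  have key2 : Real.exp (2 * a * ε) * (1 - 2 * a * ε) ≤ 1 := by
    have h := Real.add_one_le_exp (-(2 * a * ε))
    have h2 : Real.exp (2 * a * ε) * (1 - 2 * a * ε)
        ≤ Real.exp (2 * a * ε) * Real.exp (-(2 * a * ε)) :=
      mul_le_mul_of_nonneg_left (by linarith) (Real.exp_pos _).le
    rwa [← Real.exp_add, add_neg_cancel, Real.exp_zero] at h2
  set u := Real.exp (2 * a * q) with hu
  have hupos : 0 < u := Real.exp_pos _
  have key3 : u * sε < 1 := by
    have hsplit : u = e2 * Real.exp (2 * a * ε) := by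
      rw [hu, he2, ← Real.exp_add, hεdef]; ring_nf
    calc u * sε = Real.exp (2 * a * ε) * (e2 * sε) := by rw [hsplit]; ring
      _ < Real.exp (2 * a * ε) * (1 - 2 * a * ε) :=
          mul_lt_mul_of_pos_left key1 (Real.exp_pos _)
      _ ≤ 1 := key2
  set s := Real.sqrt (q ^ 2 - 1) with hs
  have hs0 : 0 ≤ s := Real.sqrt_nonneg _
  have hq21 : 0 ≤ q ^ 2 - 1 := by nlinarith
  have hs2 : s ^ 2 = q ^ 2 - 1 := Real.sq_sqrt hq21
  set w := Real.sqrt (ε + 2) with hw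
  have hw0 : 0 ≤ w := Real.sqrt_nonneg _
  have hw2 : w ^ 2 = ε + 2 := Real.sq_sqrt (by linarith)
  have hwpos : 0 < w := Real.sqrt_pos.mpr (by linarith)
  have hsw : s = sε * w := by
    rw [hs, hsε, hw, ← Real.sqrt_mul hε.le]
    congr 1; rw [hεdef]; ring
  have hmain : 2 * s * u < (q + 1 + s) ^ 2 := by
    have h2 : 2 * s * u < 2 * w := by
      have h1 : 2 * s * u = 2 * w * (u * sε) := by rw [hsw]; ring
      have h2' := mul_lt_mul_of_pos_left key3 (by linarith : (0:ℝ) < 2 * w)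
      rw [mul_one] at h2'
      linarith [h2', h1.le, h1.ge]
    have h3 : 2 * w ≤ (2 + ε) ^ 2 := aux_w ε w hε hw0 hw2
    have h4 : (2 + ε) ^ 2 ≤ (q + 1 + s) ^ 2 := by
      have hle : (2 + ε) ≤ q + 1 + s := by rw [hεdef]; linarith
      exact pow_le_pow_left₀ (by linarith) hle 2
    linarith
  have hu1 : 1 < u := by
    rw [hu]
    calc (1:ℝ) = Real.exp 0 := Real.exp_zero.symm
      _ < Real.exp (2 * a * q) := Real.exp_lt_exp.mpr
          (by positivity : (0:ℝ) < 2 * a * q)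
  have hfin : (1 + s) * (u - 1) < q * (u + 1) :=
    aux_final u s q hq1 hs0 hs2 hu1 hmain
  have hvv : u = Real.exp (a * q) * Real.exp (a * q) := by
    rw [hu, ← Real.exp_add]; ring_nf
  have ht : Real.tanh (a * q) = (u - 1) / (u + 1) := by
    rw [Real.tanh_eq_sinh_div_cosh, Real.sinh_eq, Real.cosh_eq, Real.exp_neg, hvv]
    have hv0 : Real.exp (a * q) ≠ 0 := (Real.exp_pos _).ne'
    field_simp
  have htpos : 0 < Real.tanh (a * q) := by
    rw [ht]; exact div_pos (by linarith) (by linarith)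
  rw [gt_iff_lt, lt_div_iff₀ htpos, ht, ← mul_div_assoc,
    div_lt_iff₀ (by linarith : (0:ℝ) < u + 1)]
  exact hfin
end

section
/- For any a > 0, the smaller root Q₁ := 1 + (e^{4a} + 4a)/(8a²) - e^{2a}√(e^{4a} + 8a)/(8a²) of the quadratic 4a²Q² - (4a(1+2a) + e^{4a})Q + (1+2a)² + e^{4a} satisfies 1 < Q₁ < (1+2a)/(2a). -/
theorem Q1_location (a : ℝ) (ha : 0 < a) :
    1 < 1 + (Real.exp (4 * a) + 4 * a) / (8 * a ^ 2) -
      Real.exp (2 * a) * Real.sqrt (Real.exp (4 * a) + 8 * a) / (8 * a ^ 2) ∧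
    1 + (Real.exp (4 * a) + 4 * a) / (8 * a ^ 2) -
      Real.exp (2 * a) * Real.sqrt (Real.exp (4 * a) + 8 * a) / (8 * a ^ 2) <
      (1 + 2 * a) / (2 * a) := by
  set E := Real.exp (2 * a) with hE
  have hEpos : 0 < E := Real.exp_pos _
  have h4 : Real.exp (4 * a) = E ^ 2 := by
    rw [hE, sq, ← Real.exp_add]; ring_nf
  set s := Real.sqrt (Real.exp (4 * a) + 8 * a) with hs
  have hs2 : s ^ 2 = E ^ 2 + 8 * a := by
    rw [hs, h4, Real.sq_sqrt (by positivity)]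
  have hs0 : 0 ≤ s := Real.sqrt_nonneg _
  have ha2 : (0:ℝ) < 8 * a ^ 2 := by positivity
  have hEs : E * s < E ^ 2 + 4 * a := by
    nlinarith [hs2, mul_nonneg hEpos.le hs0, sq_nonneg a, ha, sq_nonneg (E * s - (E ^ 2 + 4 * a))]
  have hEls : E < s := by
    rw [hs, h4]
    exact (Real.lt_sqrt hEpos.le).mpr (by nlinarith)
  have hE2s : E ^ 2 < E * s := by nlinarith [mul_lt_mul_of_pos_left hEls hEpos]
  rw [h4]
  constructor
  · have h1 : 0 < (E ^ 2 + 4 * a) / (8 * a ^ 2) - E * s / (8 * a ^ 2) := by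
      rw [div_sub_div_same]
      exact div_pos (by linarith) ha2
    linarith
  · have h2a : (0:ℝ) < 2 * a := by linarith
    have h2 : (E ^ 2 + 4 * a) / (8 * a ^ 2) - E * s / (8 * a ^ 2) < 1 / (2 * a) := by
      rw [div_sub_div_same, div_lt_div_iff₀ ha2 h2a]
      nlinarith [hE2s, ha]
    have h3 : (1 + 2 * a) / (2 * a) = 1 + 1 / (2 * a) := by field_simp; ring
    rw [h3]
    linarith
end

section
/- For any a > 0 and q₀ ∈ [1, √Q₁] (with Q₁ := 1 + (e^{4a}+4a)/(8a²) - e^{2a}√(e^{4a}+8a)/(8a²)), the inequality (1 + 2a)e^{-2a} - 2a e^{-2a} q₀² ≥ √(q₀² - 1) holds. -/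
set_option maxHeartbeats 800000


theorem q0_inequality (a q₀ : ℝ) (ha : 0 < a)
    (hq : q₀ ∈ Set.Icc 1 (Real.sqrt (1 + (Real.exp (4 * a) + 4 * a) / (8 * a ^ 2) -
      Real.exp (2 * a) * Real.sqrt (Real.exp (4 * a) + 8 * a) / (8 * a ^ 2)))) :
    (1 + 2 * a) * Real.exp (-(2 * a)) - 2 * a * Real.exp (-(2 * a)) * q₀ ^ 2 ≥
      Real.sqrt (q₀ ^ 2 - 1) := by
  obtain ⟨hq1, hq2⟩ := hq
  set E := Real.exp (2 * a) with hE
  have hEpos : 0 < E := Real.exp_pos _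
  have h4 : Real.exp (4 * a) = E ^ 2 := by
    rw [hE, sq, ← Real.exp_add]; ring_nf
  have hD : (0:ℝ) ≤ E ^ 2 + 8 * a := by positivity
  set s := Real.sqrt (E ^ 2 + 8 * a) with hs
  have hs2 : s ^ 2 = E ^ 2 + 8 * a := Real.sq_sqrt hD
  have hsE : E ≤ s := by
    rw [hs]
    have := Real.sqrt_le_sqrt (show E ^ 2 ≤ E ^ 2 + 8 * a by linarith)
    rwa [Real.sqrt_sq hEpos.le] at this
  set t := (s - E) / (4 * a) with ht
  have ht0 : 0 ≤ t := by
    apply div_nonneg (by linarith) (by linarith)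
  have hroot : 2 * a * t ^ 2 + E * t = 1 := by
    rw [ht]
    field_simp
    nlinarith [hs2]
  -- Q₁ = 1 + t^2
  rw [h4] at hq2
  have hQ1 : 1 + (E ^ 2 + 4 * a) / (8 * a ^ 2) - E * s / (8 * a ^ 2)
      = 1 + t ^ 2 := by
    rw [ht]
    field_simp
    nlinarith [hs2]
  have hq2' : q₀ ≤ Real.sqrt (1 + t ^ 2) := by
    rw [← hQ1]; exact hq2
  have hQle : q₀ ^ 2 ≤ 1 + t ^ 2 := by
    have h1 : (0:ℝ) ≤ 1 + t ^ 2 := by positivity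
    nlinarith [Real.sq_sqrt h1, Real.sqrt_nonneg (1 + t ^ 2),
      sq_nonneg (q₀ - Real.sqrt (1 + t ^ 2))]
  set u := Real.sqrt (q₀ ^ 2 - 1) with hu
  have hu0 : 0 ≤ u := Real.sqrt_nonneg _
  have hu2 : u ^ 2 = q₀ ^ 2 - 1 := Real.sq_sqrt (by nlinarith)
  have hut : u ≤ t := by
    nlinarith [hu2, hQle, hu0, ht0]
  have hinv : Real.exp (-(2 * a)) * E = 1 := by
    rw [hE, ← Real.exp_add]; simp
  have hinvpos : 0 < Real.exp (-(2 * a)) := Real.exp_pos _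
  have ht2 : u ^ 2 ≤ t ^ 2 := pow_le_pow_left₀ hu0 hut 2
  have h2a : 0 ≤ 2 * a * (t ^ 2 - u ^ 2) := by
    apply mul_nonneg (by linarith) (by linarith)
  have hEu : E * u ≤ E * t := mul_le_mul_of_nonneg_left hut hEpos.le
  have hq2a : 2 * a * q₀ ^ 2 = 2 * a * u ^ 2 + 2 * a := by rw [hu2]; ring
  have key : E * u ≤ 1 + 2 * a - 2 * a * q₀ ^ 2 := by linarith
  calc (1 + 2 * a) * Real.exp (-(2 * a)) - 2 * a * Real.exp (-(2 * a)) * q₀ ^ 2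
      = Real.exp (-(2 * a)) * (1 + 2 * a - 2 * a * q₀ ^ 2) := by ring
    _ ≥ Real.exp (-(2 * a)) * (E * u) := by
        exact mul_le_mul_of_nonneg_left key hinvpos.le
    _ = (Real.exp (-(2 * a)) * E) * u := by ring
    _ = u := by rw [hinv, one_mul]
end

section
/- For any a > 0 and q₀ > 1, q₀ / tanh(a q₀) > 1 + (1 + 2a)e^{-2a} - 2a e^{-2a} q₀². -/
theorem q0_div_tanh_gt (a q₀ : ℝ) (ha : 0 < a) (hq : 1 < q₀) :
    q₀ / Real.tanh (a * q₀) >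
      1 + (1 + 2 * a) * Real.exp (-(2 * a)) - 2 * a * Real.exp (-(2 * a)) * q₀ ^ 2 := by
  set x := a * q₀ with hx
  have hxpos : 0 < x := by positivity
  have hs : 0 < Real.sinh x := Real.sinh_pos_iff.mpr hxpos
  have hq0 : (0:ℝ) < q₀ := by linarith
  -- step 1: q₀ / tanh x > q₀ * (1 + exp(-(2*x)))
  have step1 : q₀ / Real.tanh x > q₀ * (1 + Real.exp (-(2*x))) := by
    rw [Real.tanh_eq_sinh_div_cosh, div_div_eq_mul_div, gt_iff_lt, lt_div_iff₀ hs]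
    have e1 : Real.exp (-(2*x)) = Real.exp (-x) * Real.exp (-x) := by
      rw [← Real.exp_add]; ring_nf
    have hco : Real.cosh x = (Real.exp x + Real.exp (-x)) / 2 := Real.cosh_eq x
    have hsi : Real.sinh x = (Real.exp x - Real.exp (-x)) / 2 := Real.sinh_eq x
    have h1 : Real.exp (-x) * Real.exp x = 1 := by rw [← Real.exp_add]; simp
    have h2 : 0 < Real.exp (-x) := Real.exp_pos _
    have h3 : 0 < Real.exp x := Real.exp_pos _
    rw [e1, hco, hsi]
    nlinarith [mul_pos hq0 (mul_pos h2 (mul_pos h2 h2)), mul_pos hq0 h2, mul_pos h2 h2]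
  -- step 2: tangent line
  have step2 : Real.exp (-(2*x)) ≥ Real.exp (-(2*a)) * (1 + 2*a - 2*a*q₀) := by
    have key : Real.exp (-(2*x)) = Real.exp (-(2*a)) * Real.exp (2*a - 2*x) := by
      rw [← Real.exp_add]; ring_nf
    have h4 : 2*a - 2*x + 1 ≤ Real.exp (2*a - 2*x) := Real.add_one_le_exp _
    have h5 : 0 < Real.exp (-(2*a)) := Real.exp_pos _
    rw [key, hx]
    nlinarith
  have hE : 0 < Real.exp (-(2*a)) := Real.exp_pos _
  calc q₀ / Real.tanh x > q₀ * (1 + Real.exp (-(2*x))) := step1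
    _ ≥ q₀ * (1 + Real.exp (-(2*a)) * (1 + 2*a - 2*a*q₀)) := by nlinarith
    _ > 1 + (1 + 2 * a) * Real.exp (-(2 * a)) - 2 * a * Real.exp (-(2 * a)) * q₀ ^ 2 := by
        nlinarith [mul_pos hE (show (0:ℝ) < q₀ - 1 by linarith), mul_pos (mul_pos ha hE) (show (0:ℝ) < q₀ - 1 by linarith)]
end

section
/- For every γ₀ > 0, with λ := √2 · γ₀ e^{-2γ₀} √(1 - 4γ₀ e^{-4γ₀}), the inequality tanh(√(γ₀² + λ²)) < √(γ₀² + λ²)/(γ₀ + λ) holds. -/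
set_option maxHeartbeats 1000000 in
theorem lambda0_admissible (γ₀ : ℝ) (hγ : 0 < γ₀) :
    Real.tanh (Real.sqrt (γ₀ ^ 2 +
        (Real.sqrt 2 * γ₀ * Real.exp (-(2 * γ₀)) *
          Real.sqrt (1 - 4 * γ₀ * Real.exp (-(4 * γ₀)))) ^ 2)) <
      Real.sqrt (γ₀ ^ 2 +
        (Real.sqrt 2 * γ₀ * Real.exp (-(2 * γ₀)) *
          Real.sqrt (1 - 4 * γ₀ * Real.exp (-(4 * γ₀)))) ^ 2) /
      (γ₀ + Real.sqrt 2 * γ₀ * Real.exp (-(2 * γ₀)) *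
          Real.sqrt (1 - 4 * γ₀ * Real.exp (-(4 * γ₀)))) := by
  set l := Real.sqrt 2 * γ₀ * Real.exp (-(2 * γ₀)) *
      Real.sqrt (1 - 4 * γ₀ * Real.exp (-(4 * γ₀))) with hldef
  set s := Real.sqrt (γ₀ ^ 2 + l ^ 2) with hsdef
  have hl0 : 0 ≤ l := by positivity
  have hs0 : 0 ≤ s := Real.sqrt_nonneg _
  have hden : 0 < γ₀ + l := by positivity
  have hsum : 0 < γ₀ + l + s := by positivity
  -- l ≤ √2 γ₀ e^{-2γ₀}
  have hle : l ≤ Real.sqrt 2 * γ₀ * Real.exp (-(2 * γ₀)) := by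
    have h1 : Real.sqrt (1 - 4 * γ₀ * Real.exp (-(4 * γ₀))) ≤ 1 := by
      refine Real.sqrt_le_one.mpr ?_
      nlinarith [Real.exp_pos (-(4 * γ₀))]
    calc l ≤ Real.sqrt 2 * γ₀ * Real.exp (-(2 * γ₀)) * 1 := by
          rw [hldef]
          exact mul_le_mul_of_nonneg_left h1 (by positivity)
      _ = Real.sqrt 2 * γ₀ * Real.exp (-(2 * γ₀)) := by ring
  have hee : Real.exp (-(2 * γ₀)) * Real.exp (-(2 * γ₀)) = Real.exp (-(4 * γ₀)) := by
    rw [← Real.exp_add]; ring_nf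
  have hsq2 : Real.sqrt 2 * Real.sqrt 2 = 2 :=
    Real.mul_self_sqrt (by norm_num)
  have hR : (Real.sqrt 2 * γ₀ * Real.exp (-(2 * γ₀))) ^ 2 =
      2 * γ₀ ^ 2 * Real.exp (-(4 * γ₀)) := by
    rw [show (Real.sqrt 2 * γ₀ * Real.exp (-(2 * γ₀))) ^ 2 =
      Real.sqrt 2 * Real.sqrt 2 * γ₀ ^ 2 *
        (Real.exp (-(2 * γ₀)) * Real.exp (-(2 * γ₀))) from by ring, hsq2, hee]
  have hl2 : l ^ 2 ≤ 2 * γ₀ ^ 2 * Real.exp (-(4 * γ₀)) := by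
    rw [← hR]; exact pow_le_pow_left₀ hl0 hle 2
  have hssq : s ^ 2 = γ₀ ^ 2 + l ^ 2 := Real.sq_sqrt (by positivity)
  have hs1 : γ₀ ≤ s := by
    rw [hsdef]
    calc γ₀ = Real.sqrt (γ₀ ^ 2) := (Real.sqrt_sq hγ.le).symm
      _ ≤ Real.sqrt (γ₀ ^ 2 + l ^ 2) :=
          Real.sqrt_le_sqrt (le_add_of_nonneg_right (sq_nonneg l))
  have hs2 : s ≤ γ₀ + γ₀ * Real.exp (-(4 * γ₀)) := by
    rw [hsdef]
    have h : γ₀ ^ 2 + l ^ 2 ≤ (γ₀ + γ₀ * Real.exp (-(4 * γ₀))) ^ 2 := by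
      nlinarith [hl2, sq_nonneg (γ₀ * Real.exp (-(4 * γ₀)))]
    calc Real.sqrt (γ₀ ^ 2 + l ^ 2) ≤
        Real.sqrt ((γ₀ + γ₀ * Real.exp (-(4 * γ₀))) ^ 2) := Real.sqrt_le_sqrt h
      _ = γ₀ + γ₀ * Real.exp (-(4 * γ₀)) := Real.sqrt_sq (by positivity)
  clear_value l s
  clear hldef hsdef
  -- 2γ₀ e^{-4γ₀} ≤ 1/(2e) < log 2 / 2
  have h4 : 4 * γ₀ ≤ Real.exp (4 * γ₀ - 1) := by
    have := Real.add_one_le_exp (4 * γ₀ - 1); linarith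
  have hsplit : Real.exp (4 * γ₀ - 1) * Real.exp 1 = Real.exp (4 * γ₀) := by
    rw [← Real.exp_add]; ring_nf
  have hinv : Real.exp (-(4 * γ₀)) * Real.exp (4 * γ₀) = 1 := by
    rw [← Real.exp_add]; simp
  have hq : 2 * γ₀ * Real.exp (-(4 * γ₀)) * (2 * Real.exp 1) ≤ 1 := by
    nlinarith [mul_le_mul_of_nonneg_right h4 (Real.exp_pos (-(4 * γ₀))).le,
      Real.exp_pos 1, Real.exp_pos (-(4 * γ₀)), Real.exp_pos (4 * γ₀ - 1)]
  have hlog : 2 * γ₀ * Real.exp (-(4 * γ₀)) < Real.log 2 / 2 := by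
    nlinarith [Real.exp_one_gt_d9, Real.log_two_gt_d9, Real.exp_pos 1,
      mul_pos (mul_pos (by linarith : (0:ℝ) < 2 * γ₀) (Real.exp_pos (-(4 * γ₀)))) two_pos]
  have hsqrt2e : Real.exp (Real.log 2 / 2) = Real.sqrt 2 := by
    rw [show Real.log 2 / 2 = Real.log (Real.sqrt 2) from
      (Real.log_sqrt (by norm_num)).symm, Real.exp_log (by positivity)]
  have hE2 : Real.exp (2 * γ₀ * Real.exp (-(4 * γ₀))) < Real.sqrt 2 := by
    rw [← hsqrt2e]; exact Real.exp_lt_exp.mpr hlog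
  have hEb : Real.exp (2 * s) ≤
      Real.exp (2 * γ₀) * Real.exp (2 * γ₀ * Real.exp (-(4 * γ₀))) := by
    rw [← Real.exp_add]
    exact Real.exp_le_exp.mpr (by nlinarith)
  -- key bound : l * e^{2s} < 2 γ₀
  have hBA : Real.exp (-(2 * γ₀)) * Real.exp (2 * γ₀) = 1 := by
    rw [← Real.exp_add]; simp
  have k1 : l * Real.exp (2 * s) < 2 * γ₀ := by
    have c1 : l * Real.exp (2 * s) ≤
        l * (Real.exp (2 * γ₀) * Real.exp (2 * γ₀ * Real.exp (-(4 * γ₀)))) :=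
      mul_le_mul_of_nonneg_left hEb hl0
    have c2 : l * (Real.exp (2 * γ₀) * Real.exp (2 * γ₀ * Real.exp (-(4 * γ₀)))) ≤
        Real.sqrt 2 * γ₀ * Real.exp (-(2 * γ₀)) *
          (Real.exp (2 * γ₀) * Real.exp (2 * γ₀ * Real.exp (-(4 * γ₀)))) :=
      mul_le_mul_of_nonneg_right hle (by positivity)
    have c3 : Real.sqrt 2 * γ₀ * Real.exp (-(2 * γ₀)) *
        (Real.exp (2 * γ₀) * Real.exp (2 * γ₀ * Real.exp (-(4 * γ₀)))) =
        Real.sqrt 2 * γ₀ * Real.exp (2 * γ₀ * Real.exp (-(4 * γ₀))) := by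
      calc Real.sqrt 2 * γ₀ * Real.exp (-(2 * γ₀)) *
          (Real.exp (2 * γ₀) * Real.exp (2 * γ₀ * Real.exp (-(4 * γ₀)))) =
          Real.sqrt 2 * γ₀ * Real.exp (2 * γ₀ * Real.exp (-(4 * γ₀))) *
            (Real.exp (-(2 * γ₀)) * Real.exp (2 * γ₀)) := by ring
        _ = _ := by rw [hBA, mul_one]
    have c4 : Real.sqrt 2 * γ₀ * Real.exp (2 * γ₀ * Real.exp (-(4 * γ₀))) <
        Real.sqrt 2 * γ₀ * Real.sqrt 2 :=
      mul_lt_mul_of_pos_left hE2 (by positivity)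
    have c5 : Real.sqrt 2 * γ₀ * Real.sqrt 2 = 2 * γ₀ := by
      calc Real.sqrt 2 * γ₀ * Real.sqrt 2 = Real.sqrt 2 * Real.sqrt 2 * γ₀ := by ring
        _ = 2 * γ₀ := by rw [hsq2]
    linarith
  have key : γ₀ * l * (Real.exp (2 * s) + 1) < (γ₀ + l) * (γ₀ + l + s) := by
    have r1 : 2 * γ₀ ^ 2 + γ₀ * l ≤ (γ₀ + l) * (γ₀ + l + s) := by
      nlinarith [mul_le_mul_of_nonneg_left hs1 hden.le, sq_nonneg l,
        mul_nonneg hγ.le hl0]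
    nlinarith [mul_lt_mul_of_pos_left k1 hγ]
  -- rewrite tanh and conclude
  have hexp : Real.exp (2 * s) = Real.exp s * Real.exp s := by
    rw [← Real.exp_add]; ring_nf
  have hpos : 0 < Real.exp (2 * s) + 1 := by positivity
  have htanh : Real.tanh s = (Real.exp (2 * s) - 1) / (Real.exp (2 * s) + 1) := by
    rw [Real.tanh_eq_sinh_div_cosh, Real.sinh_eq, Real.cosh_eq, hexp, Real.exp_neg]
    have h0 : Real.exp s ≠ 0 := (Real.exp_pos s).ne'
    field_simp
  rw [htanh, div_lt_div_iff₀ hpos hden]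
  nlinarith [key, hssq, hsum, mul_pos hsum hsum]
end

section
/- For each fixed γ₀ ≥ 1/8, the function f(t) := γ₀√(1+t²) - artanh(√(1+t²)/(1+t)) is strictly monotonically increasing on (0,∞), tends to -∞ as t → 0⁺ and to +∞ as t → +∞, and hence has a unique zero in (0,∞). -/
noncomputable def artanh (x : ℝ) : ℝ := 1 / 2 * Real.log ((1 + x) / (1 - x))

noncomputable def Ff (γ₀ t : ℝ) : ℝ :=
  γ₀ * Real.sqrt (1 + t ^ 2) - Real.log (1 + t + Real.sqrt (1 + t ^ 2))
    + 1 / 2 * Real.log (2 * t)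

lemma f_eq_F (γ₀ t : ℝ) (ht : 0 < t) :
    γ₀ * Real.sqrt (1 + t ^ 2) - artanh (Real.sqrt (1 + t ^ 2) / (1 + t)) = Ff γ₀ t := by
  set s := Real.sqrt (1 + t ^ 2) with hs
  have hs0 : 0 < s := Real.sqrt_pos.2 (by positivity)
  have hs2 : s ^ 2 = 1 + t ^ 2 := Real.sq_sqrt (by positivity)
  have hslt : s < 1 + t := by
    rw [hs, show (1:ℝ) + t = Real.sqrt ((1+t)^2) by rw [Real.sqrt_sq (by linarith)]]
    exact Real.sqrt_lt_sqrt (by positivity) (by nlinarith)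
  have h1t : (0:ℝ) < 1 + t := by linarith
  have key : (1 + s / (1 + t)) / (1 - s / (1 + t)) = (1 + t + s) ^ 2 / (2 * t) := by
    have hden : (0:ℝ) < 1 - s / (1 + t) := by
      rw [sub_pos, div_lt_one h1t]; exact hslt
    rw [div_eq_div_iff hden.ne' (by positivity : (0:ℝ) < 2*t).ne']
    field_simp
    nlinarith [hs2]
  unfold artanh Ff
  rw [key, Real.log_div (by positivity) (by positivity), Real.log_pow]
  ring

lemma hasDerivAt_f (γ₀ t : ℝ) (ht : 0 < t) :
    HasDerivAt (fun t : ℝ => γ₀ * Real.sqrt (1 + t ^ 2) -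
        artanh (Real.sqrt (1 + t ^ 2) / (1 + t)))
      ((2 * γ₀ * t ^ 2 - t + 1) / (2 * t * Real.sqrt (1 + t ^ 2))) t := by
  set s := Real.sqrt (1 + t ^ 2) with hs
  have hs0 : 0 < s := Real.sqrt_pos.2 (by positivity)
  have hs2 : s ^ 2 = 1 + t ^ 2 := Real.sq_sqrt (by positivity)
  have hinner : HasDerivAt (fun t : ℝ => 1 + t ^ 2) (2 * t) t := by
    simpa using (hasDerivAt_pow 2 t).const_add 1
  have hsqrt : HasDerivAt (fun t : ℝ => Real.sqrt (1 + t ^ 2)) (t / s) t := by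
    have h := (Real.hasDerivAt_sqrt (show (1:ℝ) + t ^ 2 ≠ 0 by positivity)).comp t hinner
    refine h.congr_deriv ?_
    rw [← hs]
    field_simp
  have hlog1 : HasDerivAt (fun t : ℝ => Real.log (1 + t + Real.sqrt (1 + t ^ 2)))
      ((1 + t / s) / (1 + t + s)) t := by
    have hin : HasDerivAt (fun t : ℝ => 1 + t + Real.sqrt (1 + t ^ 2)) (1 + t / s) t := by
      exact (((hasDerivAt_id t).const_add 1).add hsqrt)
    have h := (Real.hasDerivAt_log (show (1:ℝ) + t + s ≠ 0 by positivity)).comp t hin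
    refine h.congr_deriv ?_
    rw [div_eq_inv_mul (1 + t / s)]
  have hlog2 : HasDerivAt (fun t : ℝ => 1 / 2 * Real.log (2 * t)) (1 / (2 * t)) t := by
    have hin : HasDerivAt (fun t : ℝ => 2 * t) 2 t := by
      simpa using (hasDerivAt_id t).const_mul 2
    have h := ((Real.hasDerivAt_log (show 2 * t ≠ 0 by positivity)).comp t hin).const_mul (1/2)
    refine h.congr_deriv ?_
    field_simp
  have hF : HasDerivAt (Ff γ₀)
      (γ₀ * (t / s) - (1 + t / s) / (1 + t + s) + 1 / (2 * t)) t :=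
    ((hsqrt.const_mul γ₀).sub hlog1).add hlog2
  have heq : γ₀ * (t / s) - (1 + t / s) / (1 + t + s) + 1 / (2 * t)
      = (2 * γ₀ * t ^ 2 - t + 1) / (2 * t * s) := by
    field_simp
    linear_combination hs2
  rw [heq] at hF
  refine hF.congr_of_eventuallyEq ?_
  filter_upwards [isOpen_Ioi.mem_nhds ht] with x hx
  exact f_eq_F γ₀ x hx

noncomputable def ffun (γ₀ : ℝ) : ℝ → ℝ :=
  fun t => γ₀ * Real.sqrt (1 + t ^ 2) - artanh (Real.sqrt (1 + t ^ 2) / (1 + t))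

lemma f_cont (γ₀ : ℝ) : ContinuousOn (ffun γ₀) (Set.Ioi 0) :=
  fun x hx => (hasDerivAt_f γ₀ x hx).continuousAt.continuousWithinAt

lemma deriv_pos (γ₀ t : ℝ) (hγ : 1 / 8 ≤ γ₀) (ht : 0 < t) (hne : t ≠ 2) :
    0 < deriv (ffun γ₀) t := by
  unfold ffun
  rw [(hasDerivAt_f γ₀ t ht).deriv]
  have h2 : (0:ℝ) < (t - 2) ^ 2 := by
    have : t - 2 ≠ 0 := sub_ne_zero.2 hne
    positivity
  have hs0 : 0 < Real.sqrt (1 + t ^ 2) := Real.sqrt_pos.2 (by positivity)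
  apply div_pos _ (by positivity)
  nlinarith [h2, mul_nonneg (by linarith : (0:ℝ) ≤ γ₀ - 1/8) (sq_nonneg t)]

lemma f_mono (γ₀ : ℝ) (hγ : 1 / 8 ≤ γ₀) : StrictMonoOn (ffun γ₀) (Set.Ioi 0) := by
  have M1 : StrictMonoOn (ffun γ₀) (Set.Ioc 0 2) := by
    apply strictMonoOn_of_deriv_pos (convex_Ioc 0 2)
      ((f_cont γ₀).mono Set.Ioc_subset_Ioi_self)
    intro x hx
    rw [interior_Ioc] at hx
    exact deriv_pos γ₀ x hγ hx.1 (ne_of_lt hx.2)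
  have M2 : StrictMonoOn (ffun γ₀) (Set.Ici 2) := by
    apply strictMonoOn_of_deriv_pos (convex_Ici 2)
      ((f_cont γ₀).mono (fun x hx => lt_of_lt_of_le (by norm_num : (0:ℝ) < 2) hx))
    intro x hx
    rw [interior_Ici] at hx
    exact deriv_pos γ₀ x hγ (lt_trans (by norm_num) hx) (ne_of_gt hx)
  intro x hx y hy hxy
  rcases le_or_gt y 2 with h | h
  · exact M1 ⟨hx, by linarith⟩ ⟨hy, h⟩ hxy
  · rcases le_or_gt x 2 with h2 | h2
    · rcases eq_or_lt_of_le h2 with rfl | h3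
      · exact M2 (le_refl (2:ℝ)) h.le h
      · calc ffun γ₀ x < ffun γ₀ 2 := M1 ⟨hx, h2⟩ ⟨by norm_num, le_rfl⟩ h3
          _ < ffun γ₀ y := M2 (le_refl (2:ℝ)) h.le h
    · exact M2 h2.le h.le hxy

lemma f_bot (γ₀ : ℝ) : Filter.Tendsto (ffun γ₀) (nhdsWithin 0 (Set.Ioi 0)) Filter.atBot := by
  have hev : ffun γ₀ =ᶠ[nhdsWithin 0 (Set.Ioi 0)] Ff γ₀ := by
    filter_upwards [self_mem_nhdsWithin] with t ht
    exact f_eq_F γ₀ t ht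
  rw [Filter.tendsto_congr' hev]
  have h1 : Filter.Tendsto (fun t : ℝ => γ₀ * Real.sqrt (1 + t ^ 2) -
      Real.log (1 + t + Real.sqrt (1 + t ^ 2))) (nhdsWithin 0 (Set.Ioi 0))
      (nhds (γ₀ * Real.sqrt (1 + 0 ^ 2) - Real.log (1 + 0 + Real.sqrt (1 + 0 ^ 2)))) := by
    apply Filter.Tendsto.mono_left _ nhdsWithin_le_nhds
    apply ContinuousAt.tendsto
    have hc1 : Continuous (fun t : ℝ => 1 + t + Real.sqrt (1 + t ^ 2)) := by
      continuity
    apply ContinuousAt.sub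
    · exact (continuous_const.mul (by continuity)).continuousAt
    · exact (Real.continuousAt_log (by norm_num [Real.sqrt_one])).comp hc1.continuousAt
  have h2 : Filter.Tendsto (fun t : ℝ => 1 / 2 * Real.log (2 * t))
      (nhdsWithin 0 (Set.Ioi 0)) Filter.atBot := by
    have hin : Filter.Tendsto (fun t : ℝ => 2 * t) (nhdsWithin 0 (Set.Ioi 0))
        (nhdsWithin 0 (Set.Ioi 0)) := by
      apply tendsto_nhdsWithin_of_tendsto_nhds_of_eventually_within
      · have hc : Continuous (fun t : ℝ => 2 * t) := by continuity
        simpa using (hc.tendsto 0).mono_left nhdsWithin_le_nhds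
      · filter_upwards [self_mem_nhdsWithin] with t ht
        exact mul_pos two_pos (Set.mem_Ioi.mp ht)
    have hlog := Real.tendsto_log_nhdsGT_zero.comp hin
    exact Filter.Tendsto.const_mul_atBot (by norm_num : (0:ℝ) < 1/2) hlog
  have := h1.add_atBot h2
  exact this

lemma f_top (γ₀ : ℝ) (hγ : 1 / 8 ≤ γ₀) :
    Filter.Tendsto (ffun γ₀) Filter.atTop Filter.atTop := by
  have hγ0 : 0 < γ₀ := by linarith
  have hlog_lin : ∀ᶠ x : ℝ in Filter.atTop, Real.log x ≤ γ₀ / 2 * x := by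
    have h := Real.isLittleO_log_id_atTop.def (by positivity : (0:ℝ) < γ₀ / 2)
    filter_upwards [h, Filter.eventually_ge_atTop 0] with x hx hx0
    simp only [Real.norm_eq_abs, id] at hx
    calc Real.log x ≤ |Real.log x| := le_abs_self _
      _ ≤ γ₀ / 2 * |x| := hx
      _ = γ₀ / 2 * x := by rw [abs_of_nonneg hx0]
  have htend : Filter.Tendsto (fun t : ℝ => 2 + 2 * t) Filter.atTop Filter.atTop := by
    apply Filter.tendsto_atTop_add_const_left
    exact Filter.Tendsto.const_mul_atTop two_pos Filter.tendsto_id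
  have hcomp : ∀ᶠ t : ℝ in Filter.atTop, Real.log (2 + 2 * t) ≤ γ₀ * (1 + t) := by
    filter_upwards [htend.eventually hlog_lin] with t ht
    calc Real.log (2 + 2 * t) ≤ γ₀ / 2 * (2 + 2 * t) := ht
      _ = γ₀ * (1 + t) := by ring
  have hbound : ∀ᶠ t : ℝ in Filter.atTop,
      1 / 2 * Real.log (2 * t) - γ₀ ≤ ffun γ₀ t := by
    filter_upwards [hcomp, Filter.eventually_ge_atTop 1] with t hlb ht1
    have ht : (0:ℝ) < t := by linarith
    have key := f_eq_F γ₀ t ht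
    have hs_ge : t ≤ Real.sqrt (1 + t ^ 2) := by
      calc t = Real.sqrt (t ^ 2) := (Real.sqrt_sq ht.le).symm
        _ ≤ Real.sqrt (1 + t ^ 2) := Real.sqrt_le_sqrt (by linarith)
    have hs_le : Real.sqrt (1 + t ^ 2) ≤ 1 + t := by
      calc Real.sqrt (1 + t ^ 2) ≤ Real.sqrt ((1 + t) ^ 2) := Real.sqrt_le_sqrt (by nlinarith)
        _ = 1 + t := Real.sqrt_sq (by linarith)
    have hlog_le : Real.log (1 + t + Real.sqrt (1 + t ^ 2)) ≤ Real.log (2 + 2 * t) := by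
      apply Real.log_le_log (by positivity)
      linarith
    have h1 : γ₀ * t ≤ γ₀ * Real.sqrt (1 + t ^ 2) := by
      exact mul_le_mul_of_nonneg_left hs_ge hγ0.le
    show _ ≤ ffun γ₀ t
    rw [show ffun γ₀ t = γ₀ * Real.sqrt (1 + t ^ 2) -
        artanh (Real.sqrt (1 + t ^ 2) / (1 + t)) from rfl, key]
    unfold Ff
    linarith
  apply Filter.tendsto_atTop_mono' _ hbound
  have hlog : Filter.Tendsto (fun t : ℝ => Real.log (2 * t)) Filter.atTop Filter.atTop :=
    Real.tendsto_log_atTop.comp (Filter.Tendsto.const_mul_atTop two_pos Filter.tendsto_id)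
  exact Filter.tendsto_atTop_add_const_right _ _
    (Filter.Tendsto.const_mul_atTop (by norm_num : (0:ℝ) < 1/2) hlog)

theorem f_strict_mono_unique_zero (γ₀ : ℝ) (hγ : 1 / 8 ≤ γ₀) :
    StrictMonoOn (fun t : ℝ => γ₀ * Real.sqrt (1 + t ^ 2) -
        artanh (Real.sqrt (1 + t ^ 2) / (1 + t))) (Set.Ioi 0) ∧
    Filter.Tendsto (fun t : ℝ => γ₀ * Real.sqrt (1 + t ^ 2) -
        artanh (Real.sqrt (1 + t ^ 2) / (1 + t)))
      (nhdsWithin 0 (Set.Ioi 0)) Filter.atBot ∧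
    Filter.Tendsto (fun t : ℝ => γ₀ * Real.sqrt (1 + t ^ 2) -
        artanh (Real.sqrt (1 + t ^ 2) / (1 + t))) Filter.atTop Filter.atTop ∧
    ∃! t : ℝ, t ∈ Set.Ioi (0 : ℝ) ∧
      γ₀ * Real.sqrt (1 + t ^ 2) - artanh (Real.sqrt (1 + t ^ 2) / (1 + t)) = 0 := by
  refine ⟨f_mono γ₀ hγ, f_bot γ₀, f_top γ₀ hγ, ?_⟩
  obtain ⟨a, hfa, ha0⟩ :=
    (((f_bot γ₀).eventually (Filter.eventually_lt_atBot 0)).and self_mem_nhdsWithin).exists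
  obtain ⟨b, hfb, hab⟩ :=
    (((f_top γ₀ hγ).eventually (Filter.eventually_gt_atTop 0)).and
      (Filter.eventually_ge_atTop (a + 1))).exists
  have ha0' : (0:ℝ) < a := ha0
  have hab' : a ≤ b := by linarith
  have hsub : Set.Icc a b ⊆ Set.Ioi 0 := fun x hx => lt_of_lt_of_le ha0' hx.1
  obtain ⟨t0, ht0, hft0⟩ :=
    intermediate_value_Icc hab' ((f_cont γ₀).mono hsub) ⟨hfa.le, hfb.le⟩
  refine ⟨t0, ⟨hsub ht0, hft0⟩, ?_⟩
  rintro y ⟨hy0, hy⟩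
  exact (f_mono γ₀ hγ).injOn hy0 (hsub ht0) (by show γ₀ * Real.sqrt (1 + y ^ 2) - artanh (Real.sqrt (1 + y ^ 2) / (1 + y)) = ffun γ₀ t0; rw [hy, hft0])
end

section
/- For every γ₀ ∈ (0, 1/8), with t₁ := (1 - √(1-8γ₀))/(4γ₀), one has γ₀√(1+t₁²) - artanh(√(1+t₁²)/(1+t₁)) < 0. -/
theorem f_neg_at_t1 (γ₀ : ℝ) (hγ : γ₀ ∈ Set.Ioo (0 : ℝ) (1 / 8)) :
    γ₀ * Real.sqrt (1 + ((1 - Real.sqrt (1 - 8 * γ₀)) / (4 * γ₀)) ^ 2) -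
      artanh (Real.sqrt (1 + ((1 - Real.sqrt (1 - 8 * γ₀)) / (4 * γ₀)) ^ 2) /
        (1 + (1 - Real.sqrt (1 - 8 * γ₀)) / (4 * γ₀))) < 0 := by
  obtain ⟨hγ0, hγ8⟩ := hγ
  set s := Real.sqrt (1 - 8 * γ₀) with hs
  have hs0 : 0 ≤ s := Real.sqrt_nonneg _
  have hs2 : s ^ 2 = 1 - 8 * γ₀ := Real.sq_sqrt (by linarith)
  have hs1 : s < 1 := by
    nlinarith [sq_nonneg (s - 1)]
  set t := (1 - s) / (4 * γ₀) with ht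
  have ht0 : 0 < t := div_pos (by linarith) (by linarith)
  have ht2 : t ≤ 2 := by
    rw [ht, div_le_iff₀ (by linarith)]
    nlinarith
  -- bound on sqrt(1+t^2)
  have hS : Real.sqrt (1 + t ^ 2) ≤ 3 := by
    have h9 : 1 + t ^ 2 ≤ 9 := by nlinarith
    calc Real.sqrt (1 + t ^ 2) ≤ Real.sqrt 9 := Real.sqrt_le_sqrt h9
    _ = 3 := by rw [show (9:ℝ) = 3 ^ 2 by norm_num, Real.sqrt_sq (by norm_num)]
  have hS0 : 0 < Real.sqrt (1 + t ^ 2) := Real.sqrt_pos.mpr (by positivity)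
  have hLHS : γ₀ * Real.sqrt (1 + t ^ 2) < 3 / 8 := by nlinarith
  -- bounds on x
  set x := Real.sqrt (1 + t ^ 2) / (1 + t) with hx
  have hxlt : x < 1 := by
    rw [hx, div_lt_one (by linarith)]
    rw [show (1:ℝ) + t = Real.sqrt ((1 + t) ^ 2) by rw [Real.sqrt_sq (by linarith)]]
    exact Real.sqrt_lt_sqrt (by positivity) (by nlinarith)
  have hxge : 3 / 5 ≤ x := by
    rw [hx, le_div_iff₀ (by linarith)]
    rw [show (3:ℝ) / 5 * (1 + t) = Real.sqrt ((3 / 5 * (1 + t)) ^ 2) by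
      rw [Real.sqrt_sq (by linarith)]]
    exact Real.sqrt_le_sqrt (by nlinarith [sq_nonneg (4 * t - 9 / 4)])
  -- artanh lower bound
  have hratio : 4 ≤ (1 + x) / (1 - x) := by
    rw [le_div_iff₀ (by linarith)]
    linarith
  have hlog : Real.log 4 ≤ Real.log ((1 + x) / (1 - x)) :=
    Real.log_le_log (by norm_num) hratio
  have hlog4 : Real.log 4 = 2 * Real.log 2 := by
    rw [show (4:ℝ) = 2 ^ 2 by norm_num, Real.log_pow]; push_cast; ring
  have hart : Real.log 2 ≤ artanh x := by
    unfold artanh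
    rw [hlog4] at hlog
    linarith
  have h2 : (0.6931471803 : ℝ) < Real.log 2 := Real.log_two_gt_d9
  unfold artanh at hart ⊢
  linarith
end
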